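/- Let n_1, …, n_d be positive integers, n = n_1⋯n_d, and V ∈ ℝⁿ. Suppose (x_1, …, x_d), with x_s ∈ ℝ^{n_s} all nonzero, is a local minimizer of the function F(x_1, …, x_d) = ‖V − x_1 ⊗ ⋯ ⊗ x_d‖. Then the stationarity equations hold: for every s ∈ [1,d], x_s = (1/∏_{i≠s}‖x_i‖²) · [ (x_1 ⊗ ⋯ ⊗ x_{s−1})ᵀ ⊗ I_{n_s} ⊗ (x_{s+1} ⊗ ⋯ ⊗ x_d)ᵀ ] V (where an empty Kronecker product is interpreted as the 1×1 identity). -/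

import Mathlib

/-- The `s`-th mixed-radix digit (0-indexed) of an index `k ∈ Fin (n₁⋯n_d)`. -/
def digitFin {d : ℕ} (n : Fin d → ℕ) (s : Fin d) (k : Fin (∏ t, n t)) : Fin (n s) :=
  ⟨(k.val / ∏ t ∈ Finset.Ioi s, n t) % n s,
   Nat.mod_lt _ (Nat.pos_of_ne_zero fun h0 => by
     have hk : (0 : ℕ) < ∏ t, n t := Nat.lt_of_le_of_lt (Nat.zero_le _) k.isLt
     rw [Finset.prod_eq_zero (Finset.mem_univ s) h0] at hk
     exact Nat.lt_irrefl 0 hk)⟩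

/-- The iterated Kronecker product `x₁ ⊗ x₂ ⊗ ⋯ ⊗ x_d` of column vectors
`x_s ∈ ℝ^{n_s}`, as a vector in `ℝ^{n₁⋯n_d}` (big-endian mixed-radix indexing). -/
noncomputable def bigKron {d : ℕ} (n : Fin d → ℕ)
    (x : ∀ s, EuclideanSpace ℝ (Fin (n s))) :
    EuclideanSpace ℝ (Fin (∏ t, n t)) :=
  WithLp.toLp 2 (fun k => ∏ s, x s (digitFin n s k))

/-- The matrix `(x₁ ⊗ ⋯ ⊗ x_{s−1})ᵀ ⊗ I_{n_s} ⊗ (x_{s+1} ⊗ ⋯ ⊗ x_d)ᵀ`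
(an `n_s × (n₁⋯n_d)` matrix, empty Kronecker products being `1×1` identities)
applied to `V ∈ ℝ^{n₁⋯n_d}`: its `j`-th entry is
`∑_{k : s-th digit of k = j} (∏_{i≠s} (x_i)_{digit_i k}) · V_k`. -/
noncomputable def midProj {d : ℕ} (n : Fin d → ℕ)
    (x : ∀ s, EuclideanSpace ℝ (Fin (n s))) (s : Fin d)
    (V : EuclideanSpace ℝ (Fin (∏ t, n t))) :
    EuclideanSpace ℝ (Fin (n s)) :=
  WithLp.toLp 2 fun j => ∑ k : Fin (∏ t, n t),
    (if digitFin n s k = j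
      then ∏ i ∈ Finset.univ.erase s, x i (digitFin n i k) else 0) * V k


private lemma Ioi_zero_map {d : ℕ} :
    Finset.Ioi (0 : Fin (d+1)) = Finset.univ.map ⟨Fin.succ, Fin.succ_injective d⟩ := by
  ext i
  simp only [Finset.mem_Ioi, Finset.mem_map, Finset.mem_univ, true_and,
    Function.Embedding.coeFn_mk]
  constructor
  · intro hi
    exact ⟨i.pred (Fin.pos_iff_ne_zero.mp hi), Fin.succ_pred _ _⟩
  · rintro ⟨t, rfl⟩
    exact Fin.succ_pos t

private lemma Ioi_succ_map {d : ℕ} (s : Fin d) :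
    Finset.Ioi s.succ = (Finset.Ioi s).map ⟨Fin.succ, Fin.succ_injective d⟩ := by
  ext i
  simp only [Finset.mem_Ioi, Finset.mem_map, Function.Embedding.coeFn_mk]
  constructor
  · intro hi
    have h0 : i ≠ 0 := by
      rintro rfl; exact Fin.not_lt_zero _ hi
    refine ⟨i.pred h0, ?_, Fin.succ_pred _ _⟩
    rw [← Fin.succ_lt_succ_iff, Fin.succ_pred]
    exact hi
  · rintro ⟨t, ht, rfl⟩
    exact Fin.succ_lt_succ_iff.mpr ht

private lemma sum_prod_digitFin : ∀ {d : ℕ} (n : Fin d → ℕ) (G : ∀ i, Fin (n i) → ℝ),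
    ∑ k : Fin (∏ t, n t), ∏ i, G i (digitFin n i k) = ∏ i, ∑ v, G i v := by
  intro d
  induction d with
  | zero =>
      intro n G
      simp only [Finset.univ_eq_empty, Finset.prod_empty, Finset.sum_const, nsmul_eq_mul,
        mul_one, Finset.card_univ, Fintype.card_fin]
      norm_cast
  | succ d ih =>
      intro n G
      set m : Fin d → ℕ := fun t => n t.succ with hm
      have hW : ∏ t ∈ Finset.Ioi (0 : Fin (d+1)), n t = ∏ t, m t := by
        rw [Ioi_zero_map, Finset.prod_map]; rfl
      have hprod : ∏ t, n t = n 0 * ∏ t, m t := Fin.prod_univ_succ n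
      set e : Fin (n 0) × Fin (∏ t, m t) ≃ Fin (∏ t, n t) :=
        finProdFinEquiv.trans (finCongr hprod.symm) with he
      have heval : ∀ p : Fin (n 0) × Fin (∏ t, m t),
          ((e p : Fin (∏ t, n t)) : ℕ) = p.2 + (∏ t, m t) * p.1 := by
        intro p
        simp [he, finCongr_apply, Fin.coe_cast]
      have hd0 : ∀ (b a : ℕ), b < n 0 → a < ∏ t, m t →
          ((a + (∏ t, m t) * b) / ∏ t ∈ Finset.Ioi (0 : Fin (d+1)), n t) % n 0 = b := by
        intro b a hb ha
        rw [hW, Nat.add_mul_div_left _ _ (Nat.lt_of_le_of_lt (Nat.zero_le _) ha),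
          Nat.div_eq_of_lt ha, zero_add, Nat.mod_eq_of_lt hb]
      have hds : ∀ (b a : ℕ), a < ∏ t, m t → ∀ s : Fin d,
          ((a + (∏ t, m t) * b) / ∏ t ∈ Finset.Ioi s.succ, n t) % n s.succ
            = (a / ∏ t ∈ Finset.Ioi s, m t) % m s := by
        intro b a ha s
        have hw : ∏ t ∈ Finset.Ioi s.succ, n t = ∏ t ∈ Finset.Ioi s, m t := by
          rw [Ioi_succ_map s, Finset.prod_map]; rfl
        rw [hw]
        have hPw : (∏ t ∈ Finset.Iic s, m t) * ∏ t ∈ Finset.Ioi s, m t = ∏ t, m t := by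
          rw [show Finset.Ioi s = (Finset.Iic s)ᶜ by ext i; simp [Finset.mem_compl, not_le],
            Finset.prod_mul_prod_compl]
        have hwpos : 0 < ∏ t ∈ Finset.Ioi s, m t := by
          rcases Nat.eq_zero_or_pos (∏ t ∈ Finset.Ioi s, m t) with h | h
          · rw [h, mul_zero] at hPw; omega
          · exact h
        obtain ⟨P', hP'⟩ : m s ∣ ∏ t ∈ Finset.Iic s, m t :=
          Finset.dvd_prod_of_mem m (by simp)
        rw [show a + (∏ t, m t) * b
              = a + (∏ t ∈ Finset.Ioi s, m t) * ((∏ t ∈ Finset.Iic s, m t) * b) by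
            rw [← hPw]; ring]
        rw [Nat.add_mul_div_left _ _ hwpos, hP']
        rw [show a / (∏ t ∈ Finset.Ioi s, m t) + m s * P' * b
              = a / (∏ t ∈ Finset.Ioi s, m t) + m s * (P' * b) by ring]
        rw [Nat.add_mul_mod_self_left]
      rw [← Equiv.sum_comp e (fun k => ∏ i, G i (digitFin n i k))]
      rw [Fintype.sum_prod_type]
      have hterm : ∀ (q : Fin (n 0)) (r : Fin (∏ t, m t)),
          ∏ i : Fin (d+1), G i (digitFin n i (e (q, r)))
            = G 0 q * ∏ s : Fin d, G s.succ (digitFin m s r) := by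
        intro q r
        rw [Fin.prod_univ_succ]
        congr 1
        · congr 1
          apply Fin.ext
          show ((e (q,r) : Fin (∏ t, n t)) : ℕ) / (∏ t ∈ Finset.Ioi (0:Fin (d+1)), n t) % n 0
            = (q : ℕ)
          rw [heval]
          exact hd0 q r q.isLt r.isLt
        · refine Finset.prod_congr rfl fun s _ => ?_
          congr 1
          apply Fin.ext
          show ((e (q,r) : Fin (∏ t, n t)) : ℕ) / (∏ t ∈ Finset.Ioi s.succ, n t) % n s.succ
            = ((r : ℕ) / ∏ t ∈ Finset.Ioi s, m t) % m s
          rw [heval]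
          exact hds q r r.isLt s
      simp_rw [hterm]
      simp_rw [← Finset.mul_sum]
      rw [← Finset.sum_mul, ih m (fun s => G s.succ), Fin.prod_univ_succ]

/-- A local minimizer (with all factors nonzero) of the nearest Kronecker product
error `F(x₁,…,x_d) = ‖V − x₁ ⊗ ⋯ ⊗ x_d‖` satisfies the stationarity equations
`x_s = (1/∏_{i≠s}‖x_i‖²)·[(x₁⊗⋯⊗x_{s−1})ᵀ ⊗ I_{n_s} ⊗ (x_{s+1}⊗⋯⊗x_d)ᵀ] V`. -/
theorem NKP_stationarity {d : ℕ} (n : Fin d → ℕ) (hn : ∀ s, 0 < n s)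
    (V : EuclideanSpace ℝ (Fin (∏ t, n t)))
    (x : ∀ s, EuclideanSpace ℝ (Fin (n s))) (hx : ∀ s, x s ≠ 0)
    (hloc : IsLocalMin
      (fun z : ∀ s, EuclideanSpace ℝ (Fin (n s)) => ‖V - bigKron n z‖) x) :
    ∀ s : Fin d,
      x s = (∏ i ∈ Finset.univ.erase s, ‖x i‖ ^ 2)⁻¹ • midProj n x s V := by
  intro s
  classical
  set Q : Fin (∏ t, n t) → ℝ :=
    fun k => ∏ i ∈ Finset.univ.erase s, x i (digitFin n i k) with hQ
  have hQx : ∀ k, bigKron n x k = x s (digitFin n s k) * Q k := by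
    intro k
    show ∏ i, x i (digitFin n i k) = _
    rw [← Finset.mul_prod_erase _ _ (Finset.mem_univ s)]
  -- Key variational identity
  have key : ∀ h : EuclideanSpace ℝ (Fin (n s)),
      ∑ k : Fin (∏ t, n t),
        (V k - bigKron n x k) * (h (digitFin n s k) * Q k) = 0 := by
    intro h
    set b : Fin (∏ t, n t) → ℝ := fun k => h (digitFin n s k) * Q k with hb
    set a : Fin (∏ t, n t) → ℝ := fun k => V k - bigKron n x k with ha
    set g : ℝ → ∀ i, EuclideanSpace ℝ (Fin (n i)) :=
      fun t => Function.update x s (x s + t • h) with hg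
    have hgcont : Continuous g :=
      continuous_const.update s (continuous_const.add (continuous_id.smul continuous_const))
    have hg0 : g 0 = x := by
      rw [hg]; simp only [zero_smul, add_zero, Function.update_eq_self]
    have hmin : IsLocalMin (fun t : ℝ => ‖V - bigKron n (g t)‖) 0 := by
      have := IsLocalMin.comp_continuous
        (f := fun z : ∀ i, EuclideanSpace ℝ (Fin (n i)) => ‖V - bigKron n z‖)
        (g := g) (b := (0:ℝ)) (by rw [hg0]; exact hloc) hgcont.continuousAt
      exact this
    have hupd : ∀ (t : ℝ) k, bigKron n (g t) k = bigKron n x k + t * b k := by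
      intro t k
      have h1 : bigKron n (g t) k
          = (g t) s (digitFin n s k) * ∏ i ∈ Finset.univ.erase s,
              (g t) i (digitFin n i k) := by
        show ∏ i, (g t) i (digitFin n i k) = _
        rw [← Finset.mul_prod_erase _ _ (Finset.mem_univ s)]
      have h2 : (g t) s (digitFin n s k)
          = x s (digitFin n s k) + t * h (digitFin n s k) := by
        rw [hg]
        simp only [Function.update_self]
        simp [PiLp.add_apply, PiLp.smul_apply, smul_eq_mul]
      have h3 : ∏ i ∈ Finset.univ.erase s, (g t) i (digitFin n i k) = Q k := by
        refine Finset.prod_congr rfl fun i hi => ?_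
        show Function.update x s (x s + t • h) i (digitFin n i k) = x i (digitFin n i k)
        rw [Function.update_of_ne (Finset.ne_of_mem_erase hi)]
      rw [h1, h2, h3, hQx k, hb]
      ring
    have hmin2 : IsLocalMin (fun t : ℝ => ∑ k, (a k - t * b k)^2) 0 := by
      have heq : (fun t : ℝ => ∑ k, (a k - t * b k)^2)
          = fun t : ℝ => ‖V - bigKron n (g t)‖^2 := by
        funext t
        rw [EuclideanSpace.norm_eq, Real.sq_sqrt (by positivity)]
        refine Finset.sum_congr rfl fun k _ => ?_
        rw [Real.norm_eq_abs, sq_abs]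
        congr 1
        have : (V - bigKron n (g t)) k = V k - bigKron n (g t) k := rfl
        rw [this, hupd t k, ha]
        ring
      rw [heq]
      exact hmin.mono fun t ht => pow_le_pow_left₀ (norm_nonneg _) ht 2
    have hder : HasDerivAt (fun t : ℝ => ∑ k, (a k - t * b k)^2)
        (∑ k, 2 * (a k - 0 * b k)^(2-1) * -(1 * b k)) 0 := by
      apply HasDerivAt.fun_sum
      intro k _
      exact (((hasDerivAt_id (0:ℝ)).mul_const (b k)).const_sub (a k)).pow 2
    have hzero : ∑ k, 2 * (a k - 0 * b k)^(2-1) * -(1 * b k) = 0 := by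
      rw [← hder.deriv]
      exact hmin2.deriv_eq_zero
    have h2 : ∑ k, 2 * (a k - 0 * b k)^(2-1) * -(1 * b k)
        = -2 * ∑ k, a k * b k := by
      rw [Finset.mul_sum]
      exact Finset.sum_congr rfl fun k _ => by ring
    rw [h2] at hzero
    have := mul_left_cancel₀ (a := (-2:ℝ)) (by norm_num)
      (hzero.trans (by ring : (0:ℝ) = -2 * 0))
    exact this
  -- norm squared as sum of squares
  have hnorm : ∀ i, ‖x i‖^2 = ∑ v, (x i v)^2 := by
    intro i
    rw [EuclideanSpace.norm_eq, Real.sq_sqrt (by positivity)]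
    exact Finset.sum_congr rfl fun v _ => by rw [Real.norm_eq_abs, sq_abs]
  set c : ℝ := ∏ i ∈ Finset.univ.erase s, ‖x i‖ ^ 2 with hc
  have hcne : c ≠ 0 := by
    rw [hc]
    refine Finset.prod_ne_zero_iff.mpr fun i _ => ?_
    exact pow_ne_zero _ (norm_ne_zero_iff.mpr (hx i))
  -- componentwise identity
  have hcomp : ∀ j, midProj n x s V j = x s j * c := by
    intro j
    have hj := key (EuclideanSpace.single j 1)
    have hsplit : ∑ k : Fin (∏ t, n t),
        (V k - bigKron n x k) * ((EuclideanSpace.single j (1:ℝ)) (digitFin n s k) * Q k)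
        = (∑ k : Fin (∏ t, n t),
            (if digitFin n s k = j then Q k else 0) * V k)
          - ∑ k : Fin (∏ t, n t), bigKron n x k
              * ((if digitFin n s k = j then (1:ℝ) else 0) * Q k) := by
      rw [← Finset.sum_sub_distrib]
      refine Finset.sum_congr rfl fun k _ => ?_
      rw [EuclideanSpace.single_apply]
      by_cases hk : digitFin n s k = j <;> simp [hk] <;> ring
    -- evaluate the bigKron sum via the factorization lemma
    set G : ∀ i, Fin (n i) → ℝ :=
      Function.update (fun i v => (x i v)^2)
        s (fun v => (if v = j then (1:ℝ) else 0) * x s v) with hG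
    have hGpt : ∀ k, ∏ i, G i (digitFin n i k)
        = bigKron n x k * ((if digitFin n s k = j then (1:ℝ) else 0) * Q k) := by
      intro k
      rw [← Finset.mul_prod_erase _ _ (Finset.mem_univ s)]
      have e1 : G s (digitFin n s k)
          = (if digitFin n s k = j then (1:ℝ) else 0) * x s (digitFin n s k) := by
        rw [hG, Function.update_self]
      have e2 : ∏ i ∈ Finset.univ.erase s, G i (digitFin n i k) = Q k ^ 2 := by
        rw [← Finset.prod_pow]
        refine Finset.prod_congr rfl fun i hi => ?_
        rw [hG, Function.update_of_ne (Finset.ne_of_mem_erase hi)]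
      rw [e1, e2, hQx k]
      ring
    have hGsum : ∑ k : Fin (∏ t, n t), bigKron n x k
        * ((if digitFin n s k = j then (1:ℝ) else 0) * Q k) = x s j * c := by
      rw [← Finset.sum_congr rfl fun k _ => hGpt k]
      rw [sum_prod_digitFin n G]
      rw [← Finset.mul_prod_erase _ _ (Finset.mem_univ s)]
      have e3 : ∑ v, G s v = x s j := by
        rw [hG]
        simp only [Function.update_self, ite_mul, one_mul, zero_mul]
        simp [Finset.sum_ite_eq']
      have e4 : ∏ i ∈ Finset.univ.erase s, ∑ v, G i v = c := by
        rw [hc]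
        refine Finset.prod_congr rfl fun i hi => ?_
        rw [hG, Function.update_of_ne (Finset.ne_of_mem_erase hi), hnorm i]
      rw [e3, e4]
    rw [hsplit] at hj
    rw [hGsum] at hj
    have : midProj n x s V j = ∑ k : Fin (∏ t, n t),
        (if digitFin n s k = j then Q k else 0) * V k := rfl
    rw [this]
    linarith
  ext j
  have : ((c⁻¹ • midProj n x s V : EuclideanSpace ℝ (Fin (n s)))) j
      = c⁻¹ * midProj n x s V j := rfl
  rw [this, hcomp j]
  field_simp
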